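/- Let G be a bipartite ordered graph with parts U (|U| = w) and V (|V| = h), every vertex of U having at least one neighbor, such that G contains no ordered subgraph order-isomorphic to any bipartite ordered realization of the 0-1 patterns [[1,0,1],[0,1,1]] or [[1,1],[1,1]]. For each u ∈ U, delete the edge (u, v) with v ∈ V minimal among neighbors of u. Then in the resulting graph every vertex of V has at most one neighbor, so |E(G)| ≤ w + h - 1 (since the smallest vertex of V has no remaining edge). -/
import Mathlib


/-- Let `G` be a bipartite ordered graph with parts `U` (of size `w`) and `V` (of size
`h`), given by its edge relation `E : Fin w → Fin h → Prop`, with every vertex of `U`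
having at least one neighbor, and containing no realization of the patterns
`[[1,0,1],[0,1,1]]` or `[[1,1],[1,1]]`: there are no `u1 ≠ u2` and `v', v'' < v` with
`(u1,v'), (u1,v), (u2,v''), (u2,v)` all edges.  Deleting for each `u ∈ U` the edge to
its minimal neighbor leaves the edges `(u,v)` such that `u` has a neighbor `v' < v`;
in the resulting graph every vertex of `V` has at most one neighbor, and
`|E(G)| ≤ w + h - 1`. -/
theorem stmt_17 (w h : ℕ) (E : Fin w → Fin h → Prop)
    (hU : ∀ u, ∃ v, E u v)
    (hforb : ¬ ∃ (u1 u2 : Fin w) (v v' v'' : Fin h), u1 ≠ u2 ∧ v' < v ∧ v'' < v ∧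
      E u1 v' ∧ E u1 v ∧ E u2 v'' ∧ E u2 v) :
    (∀ (v : Fin h) (u1 u2 : Fin w),
      (E u1 v ∧ ∃ v' < v, E u1 v') → (E u2 v ∧ ∃ v' < v, E u2 v') → u1 = u2) ∧
    Nat.card {p : Fin w × Fin h // E p.1 p.2} ≤ w + h - 1 := by
  classical
  have part1 : ∀ (v : Fin h) (u1 u2 : Fin w),
      (E u1 v ∧ ∃ v' < v, E u1 v') → (E u2 v ∧ ∃ v' < v, E u2 v') → u1 = u2 := by
    rintro v u1 u2 ⟨h1, v', hv', h1'⟩ ⟨h2, v'', hv'', h2'⟩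
    by_contra hne
    exact hforb ⟨u1, u2, v, v', v'', hne, hv', hv'', h1', h1, h2', h2⟩
  refine ⟨part1, ?_⟩
  rcases Nat.eq_zero_or_pos h with rfl | hpos
  · have : Nat.card {p : Fin w × Fin 0 // E p.1 p.2} = 0 := by
      rw [Nat.card_eq_fintype_card, Fintype.card_eq_zero_iff]
      exact ⟨fun ⟨p, _⟩ => p.2.elim0⟩
    omega
  -- minimal neighbor of u
  have hne : ∀ u, (Finset.univ.filter (E u)).Nonempty := by
    intro u
    obtain ⟨v, hv⟩ := hU u
    exact ⟨v, by simp [hv]⟩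
  set minv : Fin w → Fin h := fun u => (Finset.univ.filter (E u)).min' (hne u) with hminv
  have hminE : ∀ u, E u (minv u) := fun u => by
    have := Finset.min'_mem _ (hne u)
    simpa using this
  have hminle : ∀ u v, E u v → minv u ≤ v := fun u v hv =>
    Finset.min'_le _ _ (by simp [hv])
  rw [Nat.card_eq_fintype_card, Fintype.card_subtype]
  set S := Finset.univ.filter fun p : Fin w × Fin h => E p.1 p.2 with hS
  have hsplit : (S.filter fun p : Fin w × Fin h => p.2 = minv p.1).card +
      (S.filter fun p : Fin w × Fin h => ¬ p.2 = minv p.1).card = S.card :=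
    Finset.card_filter_add_card_filter_not (fun p : Fin w × Fin h => p.2 = minv p.1)
  have h1 : (S.filter fun p => p.2 = minv p.1).card ≤ w := by
    have := Finset.card_le_card_of_injOn (f := fun p : Fin w × Fin h => p.1)
      (s := S.filter fun p => p.2 = minv p.1) (t := Finset.univ)
      (fun a _ => Finset.mem_univ _) ?_
    · simpa using this
    · intro p hp q hq hpq
      simp only at hpq
      simp only [Finset.coe_filter, Set.mem_setOf_eq] at hp hq
      exact Prod.ext hpq (by rw [hp.2, hq.2, hpq])
  have h2 : (S.filter fun p => ¬ p.2 = minv p.1).card ≤ h - 1 := by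
    have key : ∀ p ∈ S.filter fun p : Fin w × Fin h => ¬ p.2 = minv p.1,
        E p.1 p.2 ∧ minv p.1 < p.2 := by
      intro p hp
      simp only [Finset.mem_filter, hS, Finset.mem_univ, true_and] at hp
      exact ⟨hp.1, lt_of_le_of_ne (hminle _ _ hp.1) (Ne.symm hp.2)⟩
    have := Finset.card_le_card_of_injOn (f := fun p : Fin w × Fin h => p.2)
      (s := S.filter fun p => ¬ p.2 = minv p.1)
      (t := Finset.univ.erase ⟨0, hpos⟩) ?_ ?_
    · rwa [Finset.card_erase_of_mem (Finset.mem_univ _), Finset.card_univ,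
        Fintype.card_fin] at this
    · intro p hp
      obtain ⟨hE, hlt⟩ := key p hp
      refine Finset.mem_erase.mpr ⟨?_, Finset.mem_univ _⟩
      intro h0
      simp only at h0
      have h0' : (p.2 : ℕ) = 0 := by rw [h0]
      have : (minv p.1).val < (p.2 : ℕ) := hlt
      omega
    · intro p hp q hq hpq
      simp only at hpq
      obtain ⟨hEp, hltp⟩ := key p hp
      obtain ⟨hEq, hltq⟩ := key q hq
      have : p.1 = q.1 := part1 p.2 p.1 q.1 ⟨hEp, minv p.1, hltp, hminE p.1⟩
        (by rw [hpq]; exact ⟨hEq, minv q.1, hltq, hminE q.1⟩)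
      exact Prod.ext this hpq
  omega
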